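/- arXiv:1108.6185 — 2 statements merged into one kernel-verified Lean document; each statement's English description precedes it below -/
import Mathlib

section
/- Let F ∈ F[X_1,...,X_m], b_1,...,b_{m−1}, c ∈ F^m, and define F*(T_1,...,T_{m−1}) = F(T_1 b_1 + ... + T_{m−1} b_{m−1} + c). Then for any (t_1,...,t_{m−1}) ∈ F^{m−1}, mult(F*, (t_1,...,t_{m-1})) ≥ mult(F, t_1 b_1 + ... + t_{m−1} b_{m−1} + c). -/
open MvPolynomial

/-- The `k`-th Hasse derivative of a multivariate polynomial `F`: the coefficient of
`Z^k` in `F(X+Z)`, given by `F^{(k)} = ∑_d ∏_i C(d_i, k_i) · coeff_d(F) · X^{d−k}`. -/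
noncomputable def mvHasseDeriv {σ K : Type*} [CommRing K] [DecidableEq σ]
    (k : σ →₀ ℕ) (F : MvPolynomial σ K) : MvPolynomial σ K :=
  ∑ d ∈ F.support,
    MvPolynomial.monomial (d - k)
      ((∏ i ∈ k.support, Nat.choose (d i) (k i) : ℕ) • F.coeff d)

/-- `multGE F a M` means that the multiplicity of `F` at the point `a` is at least `M`,
i.e. all Hasse derivatives of order `< M` vanish at `a`. -/
def multGE {σ K : Type*} [CommRing K] [DecidableEq σ]
    (F : MvPolynomial σ K) (a : σ → K) (M : ℕ) : Prop :=
  ∀ k : σ →₀ ℕ, (k.sum fun _ n => n) < M → MvPolynomial.eval a (mvHasseDeriv k F) = 0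

/-- The multiplicity of `F` at `a`: the largest `M` such that all Hasse derivatives of
order `< M` vanish at `a` (junk value `0` for the zero polynomial, whose multiplicity
is infinite). -/
noncomputable def multAt {σ K : Type*} [CommRing K] [DecidableEq σ]
    (F : MvPolynomial σ K) (a : σ → K) : ℕ :=
  sSup {M | multGE F a M}

section aux
variable {σ K : Type*} [CommRing K] [DecidableEq σ]

lemma mvHasseDeriv_eq_sum (k : σ →₀ ℕ) (F : MvPolynomial σ K) {s : Finset (σ →₀ ℕ)}
    (hs : F.support ⊆ s) :
    mvHasseDeriv k F = ∑ d ∈ s,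
      MvPolynomial.monomial (d - k)
        ((∏ i ∈ k.support, Nat.choose (d i) (k i) : ℕ) • F.coeff d) := by
  refine Finset.sum_subset hs fun d _ hd => ?_
  rw [MvPolynomial.notMem_support_iff] at hd
  simp [hd]

lemma mvHasseDeriv_add (k : σ →₀ ℕ) (p q : MvPolynomial σ K) :
    mvHasseDeriv k (p + q) = mvHasseDeriv k p + mvHasseDeriv k q := by
  rw [mvHasseDeriv_eq_sum k (p + q) (s := p.support ∪ q.support)
      (fun d hd => MvPolynomial.support_add hd),
      mvHasseDeriv_eq_sum k p (Finset.subset_union_left),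
      mvHasseDeriv_eq_sum k q (Finset.subset_union_right),
      ← Finset.sum_add_distrib]
  refine Finset.sum_congr rfl fun d _ => ?_
  rw [MvPolynomial.coeff_add, smul_add, map_add]

lemma mvHasseDeriv_mul_X (k : σ →₀ ℕ) (p : MvPolynomial σ K) (i : σ) :
    mvHasseDeriv k (p * MvPolynomial.X i) =
      mvHasseDeriv k p * MvPolynomial.X i
        + if k i = 0 then 0 else mvHasseDeriv (k - Finsupp.single i 1) p := by
  have hmul : ∀ (u : σ →₀ ℕ) (r : K),
      MvPolynomial.monomial u r * MvPolynomial.X i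
        = MvPolynomial.monomial (u + Finsupp.single i 1) r := by
    intro u r
    rw [MvPolynomial.X, MvPolynomial.monomial_mul, mul_one]
  by_cases hk : k i = 0
  · rw [if_pos hk, add_zero, mvHasseDeriv, mvHasseDeriv, MvPolynomial.support_mul_X,
      Finset.sum_map, Finset.sum_mul]
    refine Finset.sum_congr rfl fun e he => ?_
    rw [addRightEmbedding_apply, MvPolynomial.coeff_mul_X, hmul]
    have h1 : (e + Finsupp.single i 1) - k = (e - k) + Finsupp.single i 1 := by
      ext j
      simp only [Finsupp.tsub_apply, Finsupp.add_apply, Finsupp.single_apply]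
      split_ifs with h
      · subst h; omega
      · omega
    have h2 : (∏ j ∈ k.support, ((e + Finsupp.single i 1 : σ →₀ ℕ) j).choose (k j))
        = ∏ j ∈ k.support, (e j).choose (k j) := by
      refine Finset.prod_congr rfl fun j hj => ?_
      have hne : ¬ i = j := fun h => Finsupp.mem_support_iff.mp hj (h ▸ hk)
      congr 1
      rw [Finsupp.add_apply, Finsupp.single_apply, if_neg hne, add_zero]
    rw [h1, h2]
  · rw [if_neg hk, mvHasseDeriv, mvHasseDeriv, mvHasseDeriv, MvPolynomial.support_mul_X,
      Finset.sum_map, Finset.sum_mul, ← Finset.sum_add_distrib]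
    refine Finset.sum_congr rfl fun e he => ?_
    rw [addRightEmbedding_apply, MvPolynomial.coeff_mul_X, hmul]
    have hki : i ∈ k.support := Finsupp.mem_support_iff.mpr hk
    set e' : σ →₀ ℕ := e + Finsupp.single i 1 with he'
    set k' : σ →₀ ℕ := k - Finsupp.single i 1 with hk'
    set c := p.coeff e with hc
    set R : ℕ := ∏ j ∈ k.support.erase i, (e j).choose (k j) with hR
    have he'i : e' i = e i + 1 := by simp [he']
    have hk'i : k' i = k i - 1 := by simp [hk', Finsupp.tsub_apply]
    have hN' : (∏ j ∈ k.support, (e' j).choose (k j)) = (e i + 1).choose (k i) * R := by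
      rw [← Finset.mul_prod_erase _ _ hki, he'i]
      congr 1
      refine Finset.prod_congr rfl fun j hj => ?_
      have hne : ¬ i = j := fun h => Finset.ne_of_mem_erase hj h.symm
      congr 1
      rw [he', Finsupp.add_apply, Finsupp.single_apply, if_neg hne, add_zero]
    have hN : (∏ j ∈ k.support, (e j).choose (k j)) = (e i).choose (k i) * R :=
      (Finset.mul_prod_erase _ _ hki).symm
    have hsub : k'.support ⊆ k.support := by
      intro j hj
      rw [Finsupp.mem_support_iff] at hj ⊢
      rw [hk', Finsupp.tsub_apply] at hj
      omega
    have hN'' : (∏ j ∈ k'.support, (e j).choose (k' j))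
        = (e i).choose (k i - 1) * R := by
      rw [Finset.prod_subset hsub (fun j _ hj => by
        rw [Finsupp.notMem_support_iff] at hj
        rw [hj, Nat.choose_zero_right])]
      rw [← Finset.mul_prod_erase _ _ hki, hk'i]
      congr 1
      refine Finset.prod_congr rfl fun j hj => ?_
      have hne : ¬ i = j := fun h => Finset.ne_of_mem_erase hj h.symm
      congr 1
      rw [hk', Finsupp.tsub_apply, Finsupp.single_apply, if_neg hne, Nat.sub_zero]
    have hpascal : (e i + 1).choose (k i) = (e i).choose (k i) + (e i).choose (k i - 1) := by
      obtain ⟨n, hn⟩ := Nat.exists_eq_succ_of_ne_zero hk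
      rw [hn, Nat.choose_succ_succ, Nat.succ_sub_one, add_comm]
    have hE1 : e' - k = e - k' := by
      ext j
      simp only [he', hk', Finsupp.tsub_apply, Finsupp.add_apply, Finsupp.single_apply]
      split_ifs with h
      · subst h; omega
      · omega
    rw [hN', hN, hN'', hpascal, hE1, add_mul, add_smul, map_add]
    congr 1
    by_cases hle : k i ≤ e i
    · have hE2 : e - k' = (e - k) + Finsupp.single i 1 := by
        ext j
        simp only [hk', Finsupp.tsub_apply, Finsupp.add_apply, Finsupp.single_apply]
        split_ifs with h
        · subst h; omega
        · omega
      rw [hE2]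
    · rw [Nat.choose_eq_zero_of_lt (by omega), zero_mul, zero_smul, map_zero, map_zero]

/-- Taylor expansion: the evaluation at `a` of the `k`-th Hasse derivative of `F` is the
coefficient of `X^k` in `F(X + a)`. -/
lemma eval_mvHasseDeriv (a : σ → K) (F : MvPolynomial σ K) (k : σ →₀ ℕ) :
    MvPolynomial.eval a (mvHasseDeriv k F)
      = MvPolynomial.coeff k
          (MvPolynomial.aeval (fun i => MvPolynomial.X i + MvPolynomial.C (a i)) F) := by
  induction F using MvPolynomial.induction_on generalizing k with
  | C r =>
    have hs : (MvPolynomial.C r : MvPolynomial σ K).support ⊆ {0} := by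
      rw [MvPolynomial.C_apply]; exact MvPolynomial.support_monomial_subset
    rw [mvHasseDeriv_eq_sum k _ hs, Finset.sum_singleton, MvPolynomial.aeval_C,
      MvPolynomial.algebraMap_eq]
    by_cases hk0 : k = 0
    · subst hk0
      simp
    · obtain ⟨j, hj⟩ : ∃ j, k j ≠ 0 := by
        by_contra hcon
        push_neg at hcon
        exact hk0 (Finsupp.ext fun j => hcon j)
      have hjs : j ∈ k.support := Finsupp.mem_support_iff.mpr hj
      have hN : (∏ j ∈ k.support, (((0 : σ →₀ ℕ)) j).choose (k j)) = 0 := by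
        refine Finset.prod_eq_zero hjs ?_
        rw [Finsupp.zero_apply]
        exact Nat.choose_eq_zero_of_lt (Nat.pos_of_ne_zero hj)
      rw [hN, zero_smul, map_zero, map_zero, MvPolynomial.coeff_C,
        if_neg (fun h => hk0 h.symm)]
  | add p q hp hq =>
    rw [mvHasseDeriv_add, map_add, map_add, MvPolynomial.coeff_add, hp, hq]
  | mul_X p i hp =>
    rw [mvHasseDeriv_mul_X, map_add, map_mul, MvPolynomial.eval_X, map_mul,
      MvPolynomial.aeval_X, mul_add, MvPolynomial.coeff_add, MvPolynomial.coeff_mul_X',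
      mul_comm (MvPolynomial.aeval _ p) (MvPolynomial.C (a i)), MvPolynomial.coeff_C_mul, hp]
    by_cases hki : k i = 0
    · rw [if_pos hki, if_neg (by rw [Finsupp.mem_support_iff]; exact fun h => h hki),
        map_zero]
      ring
    · rw [if_neg hki, if_pos (Finsupp.mem_support_iff.mpr hki), hp]
      ring

omit [DecidableEq σ] in
lemma isHomogeneous_pow' {φ : MvPolynomial σ K} {n : ℕ} (h : φ.IsHomogeneous n) (m : ℕ) :
    (φ ^ m).IsHomogeneous (n * m) := by
  induction m with
  | zero => simpa using MvPolynomial.isHomogeneous_one σ K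
  | succ m ih =>
    rw [pow_succ, Nat.mul_succ]
    exact ih.mul h

end aux

/-- for `F ∈ F[X_1,…,X_m]`, vectors `b_1,…,b_{m−1}, c ∈ F^m` and
`F*(T_1,…,T_{m−1}) = F(T_1 b_1 + ⋯ + T_{m−1} b_{m−1} + c)`, one has, for every
`t ∈ F^{m−1}`, `mult(F*, t) ≥ mult(F, t_1 b_1 + ⋯ + t_{m−1} b_{m−1} + c)`. -/
theorem multGE_restrict_line {m : ℕ} {K : Type*} [Field K]
    (F : MvPolynomial (Fin m) K) (b : Fin (m - 1) → Fin m → K) (c : Fin m → K)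
    (t : Fin (m - 1) → K) (M : ℕ)
    (h : multGE F (fun i => (∑ j, t j * b j i) + c i) M) :
    multGE (MvPolynomial.aeval
        (fun i => (∑ j, MvPolynomial.C (b j i) * MvPolynomial.X j)
          + MvPolynomial.C (c i)) F) t M := by
  classical
  intro k hk
  set a : Fin m → K := fun i => (∑ j, t j * b j i) + c i with ha
  set L : Fin m → MvPolynomial (Fin (m - 1)) K :=
    fun i => ∑ j, MvPolynomial.C (b j i) * MvPolynomial.X j with hL
  set G : MvPolynomial (Fin m) K :=
    MvPolynomial.aeval (fun i => MvPolynomial.X i + MvPolynomial.C (a i)) F with hG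
  have hGcoeff : ∀ d : Fin m →₀ ℕ, (d.sum fun _ n => n) < M → MvPolynomial.coeff d G = 0 := by
    intro d hd
    rw [hG, ← eval_mvHasseDeriv]
    exact h d hd
  have key : MvPolynomial.aeval (fun i => MvPolynomial.X i + MvPolynomial.C (t i))
        (MvPolynomial.aeval
          (fun i => (∑ j, MvPolynomial.C (b j i) * MvPolynomial.X j)
            + MvPolynomial.C (c i)) F)
      = MvPolynomial.aeval L G := by
    rw [hG, MvPolynomial.comp_aeval_apply, MvPolynomial.comp_aeval_apply]
    have hfun : (fun i => (MvPolynomial.aeval fun i => MvPolynomial.X i + MvPolynomial.C (t i))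
          ((∑ j, MvPolynomial.C (b j i) * MvPolynomial.X j) + MvPolynomial.C (c i)))
        = fun i => (MvPolynomial.aeval L) (MvPolynomial.X i + MvPolynomial.C (a i)) := by
      funext i
      simp only [map_add, map_sum, map_mul, MvPolynomial.aeval_X, MvPolynomial.aeval_C,
        MvPolynomial.algebraMap_eq, hL]
      have hCa : MvPolynomial.C (a i)
          = (∑ j, MvPolynomial.C (b j i) * MvPolynomial.C (t j))
            + (MvPolynomial.C (c i) : MvPolynomial (Fin (m - 1)) K) := by
        rw [ha]
        simp only [map_add, map_sum, map_mul]
        congr 1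
        exact Finset.sum_congr rfl fun j _ => mul_comm _ _
      rw [hCa]
      simp only [mul_add, Finset.sum_add_distrib]
      ring
    rw [hfun]
  rw [eval_mvHasseDeriv, key, MvPolynomial.aeval_def, MvPolynomial.eval₂_eq,
    MvPolynomial.coeff_sum]
  refine Finset.sum_eq_zero fun d hd => ?_
  rw [MvPolynomial.algebraMap_eq, MvPolynomial.coeff_C_mul]
  have hdeg : ¬ (d.sum fun _ n => n) < M :=
    fun hlt => MvPolynomial.mem_support_iff.mp hd (hGcoeff d hlt)
  have hL1 : ∀ i, (L i).IsHomogeneous 1 := by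
    intro i
    refine MvPolynomial.IsHomogeneous.sum _ _ _ fun j _ => ?_
    simpa using (MvPolynomial.isHomogeneous_C _ (b j i)).mul (MvPolynomial.isHomogeneous_X _ j)
  have hhom : (∏ i ∈ d.support, L i ^ d i).IsHomogeneous (∑ i ∈ d.support, d i) := by
    have := MvPolynomial.IsHomogeneous.prod d.support (fun i => L i ^ d i) (fun i => d i)
      (fun i _ => by simpa using isHomogeneous_pow' (hL1 i) (d i))
    simpa using this
  rw [hhom.coeff_eq_zero ?_, mul_zero]
  intro heq
  have h1 : Finsupp.degree k = k.sum fun _ n => n := rfl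
  have h2 : (∑ i ∈ d.support, d i) = d.sum fun _ n => n := rfl
  omega
end

section
/- Let F be a nonzero polynomial in F[X_1,...,X_m] with leading monomial X_1^{i_1}···X_m^{i_m} with respect to a lexicographic ordering, and let r ≥ 1. Then the number of points in S_1 × ... × S_m at which F has multiplicity at least r is at most (i_1 s_2···s_m + s_1 i_2 s_3···s_m + ... + s_1···s_{m−1} i_m)/r. -/
open MvPolynomial

open Finset Classical



section basic
variable {σ K : Type*} [CommRing K] [DecidableEq σ]

lemma mvHasseDeriv_coeff (k : σ →₀ ℕ) (F : MvPolynomial σ K) (e : σ →₀ ℕ) :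
    coeff e (mvHasseDeriv k F) =
      (∏ i ∈ k.support, (e i + k i).choose (k i)) • coeff (e + k) F := by
  classical
  unfold mvHasseDeriv
  rw [coeff_sum]
  have hkey : ∀ d ∈ F.support, d ≠ e + k →
      coeff e (monomial (d - k) ((∏ i ∈ k.support, Nat.choose (d i) (k i) : ℕ) • F.coeff d)) = 0 := by
    intro d _ hd
    rw [coeff_monomial]
    split_ifs with h
    · -- d - k = e but d ≠ e + k : some i with d i < k i
      have : ∃ i ∈ k.support, d i < k i := by
        by_contra hc
        push_neg at hc
        apply hd
        ext i
        by_cases hik : i ∈ k.support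
        · have h1 := hc i hik
          have h2 : d i - k i = e i := by rw [← h]; rfl
          have h3 : (e + k) i = e i + k i := Finsupp.add_apply e k i
          omega
        · have hk0 : k i = 0 := Finsupp.notMem_support_iff.mp hik
          have h2 : d i - k i = e i := by rw [← h]; rfl
          have h3 : (e + k) i = e i + k i := Finsupp.add_apply e k i
          omega
      obtain ⟨i, hi, hlt⟩ := this
      have : (∏ i ∈ k.support, Nat.choose (d i) (k i)) = 0 :=
        Finset.prod_eq_zero hi (Nat.choose_eq_zero_of_lt hlt)
      rw [this, zero_smul]
    · rfl
  by_cases hmem : e + k ∈ F.support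
  · rw [Finset.sum_eq_single_of_mem _ hmem]
    · have he : e + k - k = e := by
        ext i; simp [Finsupp.tsub_apply, Finsupp.add_apply]
      rw [he, coeff_monomial, if_pos rfl]
      rfl
    · intro d hd hne; exact hkey d hd hne
  · rw [MvPolynomial.notMem_support_iff.mp hmem, smul_zero]
    apply Finset.sum_eq_zero
    intro d hd
    apply hkey d hd
    rintro rfl
    exact hmem hd

end basic

section basic
variable {σ K : Type*} [CommRing K] [DecidableEq σ]

lemma mvHasseDeriv_zero (F : MvPolynomial σ K) : mvHasseDeriv 0 F = F := by
  ext e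
  rw [mvHasseDeriv_coeff]
  simp

/-- extend the product in the coeff formula to any superset of the support -/
lemma mvHasseDeriv_coeff_superset {k : σ →₀ ℕ} {s : Finset σ} (hs : k.support ⊆ s)
    (F : MvPolynomial σ K) (e : σ →₀ ℕ) :
    coeff e (mvHasseDeriv k F) =
      (∏ i ∈ s, (e i + k i).choose (k i)) • coeff (e + k) F := by
  rw [mvHasseDeriv_coeff]
  congr 1
  apply Finset.prod_subset hs
  intro i _ hi
  rw [Finsupp.notMem_support_iff.mp hi, Nat.choose_zero_right]

lemma choose_trinomial (a b c : ℕ) :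
    (a + c).choose c * (a + c + b).choose b = (b + c).choose b * (a + (b + c)).choose (b + c) := by
  have h := Nat.choose_mul (n := a + (b + c)) (k := b + c) (s := b) (by omega)
  have h1 : a + (b + c) - b = a + c := by omega
  have h2 : b + c - b = c := by omega
  rw [h1, h2] at h
  have h3 : a + c + b = a + (b + c) := by omega
  rw [h3]
  linarith [h]

lemma mvHasseDeriv_comp (k k' : σ →₀ ℕ) (F : MvPolynomial σ K) :
    mvHasseDeriv k' (mvHasseDeriv k F) =
      (∏ i ∈ (k + k').support, ((k i + k' i).choose (k i))) • mvHasseDeriv (k + k') F := by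
  classical
  have hsub : k.support ⊆ k.support ∪ k'.support := Finset.subset_union_left
  have hsub' : k'.support ⊆ k.support ∪ k'.support := Finset.subset_union_right
  have hsubkk : (k + k').support ⊆ k.support ∪ k'.support := Finsupp.support_add
  ext e
  rw [coeff_smul, mvHasseDeriv_coeff_superset hsub' (mvHasseDeriv k F) e,
    mvHasseDeriv_coeff_superset hsub F (e + k'),
    mvHasseDeriv_coeff_superset hsubkk F e]
  rw [smul_smul, smul_smul]
  have harg : e + k' + k = e + (k + k') := by
    ext i; simp [Finsupp.add_apply]; omega
  rw [harg]
  have hscal : (∏ i ∈ (k + k').support, ((k i + k' i).choose (k i)))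
      = ∏ i ∈ k.support ∪ k'.support, ((k i + k' i).choose (k i)) := by
    apply Finset.prod_subset hsubkk
    intro i _ hi
    have h0 : (k + k') i = 0 := Finsupp.notMem_support_iff.mp hi
    have h1 : k i + k' i = 0 := h0
    have hk : k i = 0 := by omega
    have hk' : k' i = 0 := by omega
    rw [hk, hk']
    rfl
  rw [hscal, ← Finset.prod_mul_distrib, ← Finset.prod_mul_distrib]
  congr 1
  apply Finset.prod_congr rfl
  intro i _
  · show (e i + k' i).choose (k' i) * ((e + k') i + k i).choose (k i)
      = (k i + k' i).choose (k i) * (e i + (k + k') i).choose ((k + k') i)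
    have h1 : (e + k') i = e i + k' i := rfl
    have h8 : (k + k') i = k i + k' i := rfl
    rw [h1, h8]
    exact choose_trinomial (e i) (k i) (k' i)

lemma Finsupp.wsum_add (k k' : σ →₀ ℕ) :
    ((k + k').sum fun _ n => n) = (k.sum fun _ n => n) + (k'.sum fun _ n => n) :=
  Finsupp.sum_add_index' (fun _ => rfl) (fun _ _ _ => rfl)

lemma multGE_hasse {F : MvPolynomial σ K} {a : σ → K} {M : ℕ} (h : multGE F a M)
    (k : σ →₀ ℕ) : multGE (mvHasseDeriv k F) a (M - (k.sum fun _ n => n)) := by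
  intro k' hk'
  rw [mvHasseDeriv_comp]
  rw [map_nsmul]
  have : MvPolynomial.eval a (mvHasseDeriv (k + k') F) = 0 := by
    apply h
    rw [Finsupp.wsum_add]
    omega
  rw [this, smul_zero]

lemma multGE_anti {F : MvPolynomial σ K} {a : σ → K} {M M' : ℕ} (hMM : M' ≤ M)
    (h : multGE F a M) : multGE F a M' := fun k hk => h k (lt_of_lt_of_le hk hMM)

lemma multGE_zero (F : MvPolynomial σ K) (a : σ → K) : multGE F a 0 :=
  fun _ hk => absurd hk (Nat.not_lt_zero _)

end basic

section basic
variable {σ K : Type*} [CommRing K] [DecidableEq σ] [LinearOrder σ]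

lemma mvHasseDeriv_lead {F : MvPolynomial σ K} {I : σ →₀ ℕ}
    (hlead : ∀ d ∈ F.support, toLex d ≤ toLex I) :
    mvHasseDeriv I F = C (coeff I F) := by
  ext e
  rw [mvHasseDeriv_coeff, coeff_C]
  rcases eq_or_ne e 0 with rfl | he
  · simp
  · rw [if_neg (Ne.symm he)]
    have hnot : coeff (e + I) F = 0 := by
      by_contra hc
      have hmem : e + I ∈ F.support := MvPolynomial.mem_support_iff.mpr hc
      have h1 : toLex (e + I) ≤ toLex I := hlead _ hmem
      have h2 : toLex I ≤ toLex (e + I) := by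
        apply Finsupp.toLex_monotone
        intro i
        simp [Finsupp.add_apply]
      have h3 : I = e + I := toLex.injective (le_antisymm h2 h1)
      apply he
      ext i
      have h4 := DFunLike.congr_fun h3 i
      simp [Finsupp.add_apply] at h4 ⊢
      omega
    rw [hnot, smul_zero]

variable {F : MvPolynomial σ K} {I : σ →₀ ℕ} {a : σ → K}

lemma not_multGE_top (hcoeff : coeff I F ≠ 0)
    (hlead : ∀ d ∈ F.support, toLex d ≤ toLex I) :
    ¬ multGE F a ((I.sum fun _ n => n) + 1) := by
  intro h
  have := h I (Nat.lt_succ_self _)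
  rw [mvHasseDeriv_lead hlead] at this
  simp at this
  exact hcoeff this

lemma multGE_bddAbove (hcoeff : coeff I F ≠ 0)
    (hlead : ∀ d ∈ F.support, toLex d ≤ toLex I) :
    BddAbove {M | multGE F a M} := by
  refine ⟨(I.sum fun _ n => n), fun M hM => ?_⟩
  by_contra hgt
  push_neg at hgt
  exact not_multGE_top hcoeff hlead (multGE_anti hgt hM)

lemma le_multAt (hcoeff : coeff I F ≠ 0)
    (hlead : ∀ d ∈ F.support, toLex d ≤ toLex I) {M : ℕ} (h : multGE F a M) :
    M ≤ multAt F a :=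
  le_csSup (multGE_bddAbove hcoeff hlead) h

lemma multGE_multAt (hcoeff : coeff I F ≠ 0)
    (hlead : ∀ d ∈ F.support, toLex d ≤ toLex I) :
    multGE F a (multAt F a) :=
  Nat.sSup_mem (⟨0, multGE_zero F a⟩ : Set.Nonempty {M | multGE F a M}) (multGE_bddAbove hcoeff hlead)

lemma multAt_le (hcoeff : coeff I F ≠ 0)
    (hlead : ∀ d ∈ F.support, toLex d ≤ toLex I) :
    multAt F a ≤ (I.sum fun _ n => n) := by
  by_contra hgt
  push_neg at hgt
  exact not_multGE_top hcoeff hlead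
    (multGE_anti hgt (multGE_multAt hcoeff hlead))

end basic

section fin
variable {K : Type*} [CommRing K] {n : ℕ}

lemma cons_add' (t c : ℕ) (d' k : Fin n →₀ ℕ) :
    Finsupp.cons t d' + Finsupp.cons c k = Finsupp.cons (t + c) (d' + k) := by
  ext i
  refine Fin.cases ?_ (fun j => ?_) i <;>
    simp [Finsupp.add_apply, Finsupp.cons_zero, Finsupp.cons_succ]

lemma wsum_cons (c : ℕ) (k : Fin n →₀ ℕ) :
    ((Finsupp.cons c k).sum fun _ m => m) = c + (k.sum fun _ m => m) := by
  rw [Finsupp.sum_fintype _ _ (fun _ => rfl), Finsupp.sum_fintype _ _ (fun _ => rfl),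
    Fin.sum_univ_succ]
  simp [Finsupp.cons_zero, Finsupp.cons_succ]

lemma hasse_coeff_comm (k : Fin n →₀ ℕ) (t : ℕ) (F : MvPolynomial (Fin (n + 1)) K) :
    (finSuccEquiv K n (mvHasseDeriv (Finsupp.cons 0 k) F)).coeff t
      = mvHasseDeriv k ((finSuccEquiv K n F).coeff t) := by
  ext d'
  rw [finSuccEquiv_coeff_coeff,
    mvHasseDeriv_coeff_superset (Finset.subset_univ _) F,
    mvHasseDeriv_coeff_superset (Finset.subset_univ _) _ d']
  rw [finSuccEquiv_coeff_coeff, cons_add', add_zero]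
  congr 1
  rw [Fin.prod_univ_succ]
  simp [Finsupp.cons_zero, Finsupp.cons_succ]


lemma finSuccEquiv_hasse_single (j : ℕ) (F : MvPolynomial (Fin (n + 1)) K) :
    finSuccEquiv K n (mvHasseDeriv (Finsupp.cons j (0 : Fin n →₀ ℕ)) F)
      = Polynomial.hasseDeriv j (finSuccEquiv K n F) := by
  apply Polynomial.ext
  intro t
  ext d'
  rw [finSuccEquiv_coeff_coeff,
    mvHasseDeriv_coeff_superset (Finset.subset_univ _) F,
    Polynomial.hasseDeriv_coeff, cons_add', add_zero]
  rw [← MvPolynomial.C_eq_coe_nat, MvPolynomial.coeff_C_mul, finSuccEquiv_coeff_coeff]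
  rw [Fin.prod_univ_succ]
  simp only [Finsupp.cons_zero, Finsupp.cons_succ, Finsupp.coe_zero, Pi.zero_apply,
    Nat.choose_zero_right, Finset.prod_const_one, mul_one]
  rw [nsmul_eq_mul]


lemma map_hasseDeriv' {R S : Type*} [CommRing R] [CommRing S] (φ : R →+* S) (j : ℕ)
    (p : Polynomial R) :
    (Polynomial.hasseDeriv j p).map φ = Polynomial.hasseDeriv j (p.map φ) := by
  ext t
  simp [Polynomial.hasseDeriv_coeff, Polynomial.coeff_map]

end fin

section field
variable {K : Type*} [Field K] {n : ℕ}

lemma multGE_rootMult {G : MvPolynomial (Fin (n + 1)) K} {a' : Fin n → K} {b : K} {N : ℕ}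
    (h : multGE G (Fin.cons b a') N)
    (hg : Polynomial.map (MvPolynomial.eval a') (finSuccEquiv K n G) ≠ 0) :
    N ≤ (Polynomial.map (MvPolynomial.eval a') (finSuccEquiv K n G)).rootMultiplicity b := by
  set g := Polynomial.map (MvPolynomial.eval a') (finSuccEquiv K n G) with hgdef
  rw [Polynomial.le_rootMultiplicity_iff hg]
  have hX : Polynomial.X ^ N ∣ Polynomial.taylor b g := by
    rw [Polynomial.X_pow_dvd_iff]
    intro d hd
    rw [Polynomial.taylor_coeff]
    have hkey : Polynomial.hasseDeriv d g
        = Polynomial.map (MvPolynomial.eval a')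
            (finSuccEquiv K n (mvHasseDeriv (Finsupp.cons d (0 : Fin n →₀ ℕ)) G)) := by
      rw [finSuccEquiv_hasse_single, hgdef, map_hasseDeriv']
    rw [hkey, ← eval_eq_eval_mv_eval']
    apply h
    rw [wsum_cons]
    simpa using hd
  obtain ⟨q, hq⟩ := hX
  refine ⟨q.comp (Polynomial.X - Polynomial.C b), ?_⟩
  have hgg : g = Polynomial.taylor (-b) (Polynomial.taylor b g) := by
    rw [Polynomial.taylor_taylor]
    simp
  rw [hgg, hq, Polynomial.taylor_apply, Polynomial.mul_comp, Polynomial.pow_comp,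
    Polynomial.X_comp]
  congr 2 <;> simp [sub_eq_add_neg]

lemma sum_rootMult_le (g : Polynomial K) (hg : g ≠ 0) (S0 : Finset K) :
    ∑ b ∈ S0, g.rootMultiplicity b ≤ g.natDegree := by
  classical
  calc ∑ b ∈ S0, g.rootMultiplicity b = ∑ b ∈ S0, g.roots.count b := by
        simp [Polynomial.count_roots]
    _ = ∑ b ∈ S0 ∩ g.roots.toFinset, g.roots.count b := by
        rw [Finset.sum_subset Finset.inter_subset_left]
        intro b hb hnb
        rw [Multiset.count_eq_zero_of_notMem]
        intro hmem
        exact hnb (Finset.mem_inter.mpr ⟨hb, Multiset.mem_toFinset.mpr hmem⟩)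
    _ ≤ ∑ b ∈ g.roots.toFinset, g.roots.count b :=
        Finset.sum_le_sum_of_subset Finset.inter_subset_right
    _ = Multiset.card g.roots := g.roots.toFinset_sum_count_eq
    _ ≤ g.natDegree := Polynomial.card_roots' g

end field

section lex
variable {n : ℕ}

lemma lex_apply_zero_le {x y : Fin (n + 1) →₀ ℕ} (h : toLex x ≤ toLex y) : x 0 ≤ y 0 := by
  rcases ((le_iff_eq_or_lt.mp h).imp id Finsupp.Lex.lt_iff.mp) with heq | ⟨i, hji, hlt⟩
  · rw [show x = y from congrArg ofLex heq]
  · rcases eq_or_ne i 0 with rfl | hi0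
    · exact le_of_lt hlt
    · have := hji 0 (Fin.pos_of_ne_zero hi0)
      simp only [ofLex_toLex] at this
      rw [this]

lemma lex_cons_le {t : ℕ} {x y : Fin n →₀ ℕ}
    (h : toLex (Finsupp.cons t x) ≤ toLex (Finsupp.cons t y)) : toLex x ≤ toLex y := by
  rcases ((le_iff_eq_or_lt.mp h).imp id Finsupp.Lex.lt_iff.mp) with heq | ⟨i, hji, hlt⟩
  · have : Finsupp.cons t x = Finsupp.cons t y := congrArg ofLex heq
    have : x = y := by
      ext j
      have := DFunLike.congr_fun this j.succ
      simpa [Finsupp.cons_succ] using this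
    rw [this]
  · rcases eq_or_ne i 0 with rfl | hi0
    · simp only [ofLex_toLex, Finsupp.cons_zero] at hlt
      exact absurd hlt (lt_irrefl t)
    · obtain ⟨j, rfl⟩ := Fin.exists_succ_eq.mpr hi0
      apply le_of_lt
      rw [Finsupp.Lex.lt_iff]
      refine ⟨j, fun j' hj' => ?_, ?_⟩
      · have := hji j'.succ (by simpa [Fin.succ_lt_succ_iff] using hj')
        simpa [Finsupp.cons_succ] using this
      · simpa [Finsupp.cons_succ] using hlt

end lex

section fins
variable {n : ℕ}

lemma prod_erase_zero' (f : Fin (n + 1) → ℕ) :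
    ∏ k ∈ (Finset.univ.erase (0 : Fin (n + 1))), f k = ∏ k : Fin n, f k.succ := by
  rw [Fin.univ_succ, Finset.erase_cons, Finset.prod_map]
  rfl

lemma prod_erase_succ' (f : Fin (n + 1) → ℕ) (j : Fin n) :
    ∏ k ∈ Finset.univ.erase j.succ, f k = f 0 * ∏ k ∈ Finset.univ.erase j, f k.succ := by
  rw [Fin.univ_succ, Finset.erase_cons_of_ne _ (Fin.succ_ne_zero j).symm,
    Finset.prod_cons]
  congr 1
  have h := Finset.map_erase (⟨Fin.succ, Fin.succ_injective n⟩ : Fin n ↪ Fin (n + 1))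
    Finset.univ j
  rw [show ((Finset.univ.map (⟨Fin.succ, Fin.succ_injective n⟩ : Fin n ↪ Fin (n + 1))).erase
      j.succ) = (Finset.univ.erase j).map (⟨Fin.succ, Fin.succ_injective n⟩ : Fin n ↪ Fin (n + 1))
    from h.symm, Finset.prod_map]
  rfl

lemma piFinset_sum_split {K : Type*} (S : Fin (n + 1) → Finset K) (f : (Fin (n + 1) → K) → ℕ) :
    ∑ a ∈ Fintype.piFinset S, f a
      = ∑ b ∈ S 0, ∑ a' ∈ Fintype.piFinset (fun j : Fin n => S j.succ), f (Fin.cons b a') := by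
  classical
  rw [← Finset.sum_product']
  apply Finset.sum_nbij' (fun a => ((a 0, Fin.tail a) : K × (Fin n → K)))
    (fun p => Fin.cons p.1 p.2)
  · intro a ha
    rw [Fintype.mem_piFinset] at ha
    refine Finset.mem_product.mpr ⟨ha 0, ?_⟩
    rw [Fintype.mem_piFinset]
    intro j
    exact ha j.succ
  · intro p hp
    rw [Finset.mem_product] at hp
    rw [Fintype.mem_piFinset]
    intro i
    refine Fin.cases ?_ (fun j => ?_) i
    · simpa using hp.1
    · rw [Fin.cons_succ]
      exact Fintype.mem_piFinset.mp hp.2 j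
  · intro a _
    exact Fin.cons_self_tail a
  · intro p _
    simp
  · intro a _
    rw [Fin.cons_self_tail]

end fins

section main
variable {K : Type*} [Field K]

lemma fiber_bound {n : ℕ} (S0 : Finset K) (F : MvPolynomial (Fin (n + 1)) K)
    (I : Fin (n + 1) →₀ ℕ) (hcoeff : F.coeff I ≠ 0)
    (hlead : ∀ d ∈ F.support, toLex d ≤ toLex I) (a' : Fin n → K) :
    ∑ b ∈ S0, multAt F (Fin.cons b a')
      ≤ S0.card * multAt ((finSuccEquiv K n F).coeff (I 0)) a' + I 0 := by
  classical
  set t := I 0 with ht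
  set ft := (finSuccEquiv K n F).coeff t with hft
  have hft_coeff : ft.coeff I.tail ≠ 0 := by
    rw [hft, finSuccEquiv_coeff_coeff, Finsupp.cons_tail]
    exact hcoeff
  have hft_lead : ∀ d' ∈ ft.support, toLex d' ≤ toLex I.tail := by
    intro d' hd'
    have hFc : F.coeff (Finsupp.cons t d') ≠ 0 := by
      rw [hft, mem_support_iff, finSuccEquiv_coeff_coeff] at hd'
      exact hd'
    have := hlead _ (mem_support_iff.mpr hFc)
    rw [← Finsupp.cons_tail I, ht] at this
    exact lex_cons_le this
  set μ' := multAt ft a' with hμ'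
  have hnot : ¬ multGE ft a' (μ' + 1) := by
    intro hmem
    have := le_multAt hft_coeff hft_lead hmem
    omega
  rw [multGE] at hnot
  push_neg at hnot
  obtain ⟨k, hks, hkev⟩ := hnot
  have hksum : (k.sum fun _ m => m) ≤ μ' := by omega
  set G := mvHasseDeriv (Finsupp.cons 0 k) F with hG
  set g := Polynomial.map (MvPolynomial.eval a') (finSuccEquiv K n G) with hg
  have hg_coefft : g.coeff t = MvPolynomial.eval a' (mvHasseDeriv k ft) := by
    rw [hg, Polynomial.coeff_map, hG, hasse_coeff_comm, hft]
  have hgne : g ≠ 0 := by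
    intro h0
    rw [h0, Polynomial.coeff_zero] at hg_coefft
    exact hkev hg_coefft.symm
  have hdeg : g.natDegree ≤ t := by
    rw [Polynomial.natDegree_le_iff_coeff_eq_zero]
    intro j hj
    rw [hg, Polynomial.coeff_map]
    have hzero : (finSuccEquiv K n G).coeff j = 0 := by
      ext d'
      rw [finSuccEquiv_coeff_coeff, coeff_zero, hG, mvHasseDeriv_coeff, cons_add', add_zero]
      have hns : Finsupp.cons j (d' + k) ∉ F.support := by
        intro hmem
        have := lex_apply_zero_le (hlead _ hmem)
        rw [Finsupp.cons_zero] at this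
        omega
      rw [notMem_support_iff.mp hns, smul_zero]
    rw [hzero, map_zero]
  have hb : ∀ b ∈ S0, multAt F (Fin.cons b a')
      ≤ (k.sum fun _ m => m) + g.rootMultiplicity b := by
    intro b _
    have h1 : multGE F (Fin.cons b a') (multAt F (Fin.cons b a')) :=
      multGE_multAt hcoeff hlead
    have h2 := multGE_hasse h1 (Finsupp.cons 0 k)
    rw [wsum_cons, Nat.zero_add] at h2
    have h3 : multAt F (Fin.cons b a') - (k.sum fun _ m => m) ≤ g.rootMultiplicity b :=
      multGE_rootMult h2 hgne
    omega
  calc ∑ b ∈ S0, multAt F (Fin.cons b a')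
      ≤ ∑ b ∈ S0, ((k.sum fun _ m => m) + g.rootMultiplicity b) := Finset.sum_le_sum hb
    _ = S0.card * (k.sum fun _ m => m) + ∑ b ∈ S0, g.rootMultiplicity b := by
        rw [Finset.sum_add_distrib, Finset.sum_const, smul_eq_mul]
    _ ≤ S0.card * μ' + t := by
        have h4 := sum_rootMult_le g hgne S0
        have h5 : S0.card * (k.sum fun _ m => m) ≤ S0.card * μ' :=
          Nat.mul_le_mul_left _ hksum
        omega

lemma sum_multAt_le : ∀ (n : ℕ) (S : Fin n → Finset K) (F : MvPolynomial (Fin n) K)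
    (I : Fin n →₀ ℕ), F.coeff I ≠ 0 → (∀ d ∈ F.support, toLex d ≤ toLex I) →
    ∑ a ∈ Fintype.piFinset S, multAt F a
      ≤ ∑ j : Fin n, I j * ∏ k ∈ Finset.univ.erase j, (S k).card := by
  intro n
  induction n with
  | zero =>
    intro S F I hc hl
    have hI : I = 0 := by ext i; exact i.elim0
    have : ∀ a ∈ Fintype.piFinset S, multAt F a = 0 := by
      intro a _
      have := multAt_le hc hl (a := a)
      rw [hI] at this
      simpa using this
    rw [Finset.sum_eq_zero this]
    exact Nat.zero_le _
  | succ n ih =>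
    intro S F I hc hl
    set t := I 0 with ht
    set ft := (finSuccEquiv K n F).coeff t with hft
    have hft_coeff : ft.coeff I.tail ≠ 0 := by
      rw [hft, finSuccEquiv_coeff_coeff, Finsupp.cons_tail]
      exact hc
    have hft_lead : ∀ d' ∈ ft.support, toLex d' ≤ toLex I.tail := by
      intro d' hd'
      have hFc : F.coeff (Finsupp.cons t d') ≠ 0 := by
        rw [hft, mem_support_iff, finSuccEquiv_coeff_coeff] at hd'
        exact hd'
      have := hl _ (mem_support_iff.mpr hFc)
      rw [← Finsupp.cons_tail I, ht] at this
      exact lex_cons_le this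
    rw [piFinset_sum_split]
    rw [Finset.sum_comm]
    calc ∑ a' ∈ Fintype.piFinset (fun j : Fin n => S j.succ), ∑ b ∈ S 0,
            multAt F (Fin.cons b a')
        ≤ ∑ a' ∈ Fintype.piFinset (fun j : Fin n => S j.succ),
            ((S 0).card * multAt ft a' + t) := by
          apply Finset.sum_le_sum
          intro a' _
          exact fiber_bound (S 0) F I hc hl a'
      _ = (S 0).card * (∑ a' ∈ Fintype.piFinset (fun j : Fin n => S j.succ), multAt ft a')
            + t * ∏ j : Fin n, (S j.succ).card := by
          rw [Finset.sum_add_distrib, Finset.sum_const, smul_eq_mul, Finset.mul_sum,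
            Fintype.card_piFinset]
          ring_nf
      _ ≤ (S 0).card * (∑ j : Fin n, I.tail j * ∏ k ∈ Finset.univ.erase j, (S k.succ).card)
            + t * ∏ j : Fin n, (S j.succ).card := by
          have := ih (fun j => S j.succ) ft I.tail hft_coeff hft_lead
          exact Nat.add_le_add_right (Nat.mul_le_mul_left _ this) _
      _ = ∑ j : Fin (n + 1), I j * ∏ k ∈ Finset.univ.erase j, (S k).card := by
          rw [Fin.sum_univ_succ, prod_erase_zero' (fun k => (S k).card)]
          rw [Finset.mul_sum, add_comm]
          congr 1
          apply Finset.sum_congr rfl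
          intro j _
          rw [prod_erase_succ' (fun k => (S k).card) j, Finsupp.tail_apply]
          ring

end main


/-- if the leading monomial of a nonzero polynomial `F` with respect to
the lexicographic ordering is `X_1^{i_1}⋯X_m^{i_m}` and `r ≥ 1`, then the number of
points of `S_1 × ⋯ × S_m` at which `F` has multiplicity at least `r` is at most
`(i_1 s_2⋯s_m + s_1 i_2 s_3⋯s_m + ⋯ + s_1⋯s_{m−1} i_m)/r`. -/
theorem zeros_mult_r_lex_bound {m : ℕ} {K : Type*} [Field K]
    (S : Fin m → Finset K) (F : MvPolynomial (Fin m) K) (I : Fin m →₀ ℕ) (r : ℕ)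
    (hr : 1 ≤ r) (hcoeff : F.coeff I ≠ 0)
    (hlead : ∀ d ∈ F.support, toLex d ≤ toLex I) :
    (((Fintype.piFinset S).filter (fun a => multGE F a r)).card : ℝ)
      ≤ (∑ j : Fin m, I j * ∏ k ∈ Finset.univ.erase j, (S k).card : ℕ) / r := by
  classical
  set T := (Fintype.piFinset S).filter (fun a => multGE F a r) with hT
  set N := ∑ j : Fin m, I j * ∏ k ∈ Finset.univ.erase j, (S k).card with hN
  have hkey : T.card * r ≤ N := by
    calc T.card * r = ∑ _a ∈ T, r := by rw [Finset.sum_const, smul_eq_mul]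
      _ ≤ ∑ a ∈ T, multAt F a := by
          apply Finset.sum_le_sum
          intro a ha
          exact le_multAt hcoeff hlead (Finset.mem_filter.mp ha).2
      _ ≤ ∑ a ∈ Fintype.piFinset S, multAt F a := by
          apply Finset.sum_le_sum_of_subset
          intro a ha
          exact (Finset.mem_filter.mp ha).1
      _ ≤ N := sum_multAt_le m S F I hcoeff hlead
  have hr' : (0 : ℝ) < r := by positivity
  rw [le_div_iff₀ hr']
  calc (T.card : ℝ) * r = ((T.card * r : ℕ) : ℝ) := by push_cast; ring
    _ ≤ (N : ℝ) := Nat.cast_le.mpr hkey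
end
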